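/- Let q be a prime power and J ⊆ F_{q²}[x,y]/(y^q + y − x^{q+1}) the ideal of functions vanishing at all q³ affine rational points of the Hermitian curve. Then J is generated as an ideal by x^{q²} − x, and the quotient ring R/J has dimension q³ over F_{q²}. -/

import Mathlib

open Finset MvPolynomial

private lemma herm_charP {q p k : ℕ} (hp : p.Prime) (hk : 0 < k) (hpk : p ^ k = q)
    {F : Type*} [Field F] [Fintype F] (hF : Fintype.card F = q ^ 2) : CharP F p := by
  haveI := Fact.mk hp
  let r := ringChar F
  have hr : r.Prime := CharP.char_is_prime F r
  haveI := Fact.mk hr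
  obtain ⟨n, hn⟩ := FiniteField.card F r
  have hdvd : p ∣ r := by
    have h1 : p ∣ Fintype.card F := by
      rw [hF, ← hpk, ← pow_mul]
      exact dvd_pow_self p (by positivity)
    rw [hn.2] at h1
    exact hp.dvd_of_dvd_pow h1
  have : p = r := ((Nat.prime_dvd_prime_iff_eq hp hr).mp hdvd)
  rw [this]
  exact ringChar.charP F

private lemma herm_count {q : ℕ} (hq : IsPrimePow q)
    {F : Type*} [Field F] [Fintype F] (hF : Fintype.card F = q ^ 2) :
    Nat.card {p : F × F | p.2 ^ q + p.2 = p.1 ^ (q + 1)} = q ^ 3 := by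
  classical
  obtain ⟨p, k, hp, hk, hpk⟩ := hq
  replace hp := Nat.prime_iff.mpr hp
  haveI := Fact.mk hp
  haveI : CharP F p := herm_charP hp hk hpk hF
  have hq2 : 2 ≤ q := by
    rw [← hpk]; calc 2 ≤ p := hp.two_le
    _ = p ^ 1 := (pow_one p).symm
    _ ≤ p ^ k := Nat.pow_le_pow_right hp.pos hk
  have hq0 : 0 < q := by omega
  have hadd : ∀ a b : F, (a + b) ^ q + (a + b) = (a ^ q + a) + (b ^ q + b) := by
    intro a b
    rw [← hpk, add_pow_char_pow]
    ring
  let φ : F →+ F := AddMonoidHom.mk' (fun b => b ^ q + b) hadd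
  have hcardF : ∀ a : F, a ^ q ^ 2 = a := by
    intro a; rw [← hF]; exact FiniteField.pow_card a
  have rootbound : ∀ c : F, (univ.filter (fun b : F => b ^ q + b = c)).card ≤ q := by
    intro c
    have hmonic : (Polynomial.X ^ q + Polynomial.X - Polynomial.C c : Polynomial F).Monic := by
      have : (Polynomial.X ^ q + Polynomial.X - Polynomial.C c : Polynomial F)
          = Polynomial.X ^ q - (Polynomial.C c - Polynomial.X) := by ring
      rw [this]
      apply Polynomial.monic_X_pow_sub
      apply lt_of_le_of_lt (Polynomial.degree_sub_le _ _)
      rw [sup_lt_iff]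
      constructor
      · exact lt_of_le_of_lt Polynomial.degree_C_le (by exact_mod_cast hq0)
      · rw [Polynomial.degree_X]; exact_mod_cast hq2
    have hdeg : (Polynomial.X ^ q + Polynomial.X - Polynomial.C c : Polynomial F).natDegree = q := by
      compute_degree!
      · rw [if_neg (by omega : ¬ (1:ℕ) = q), if_neg (by omega : ¬ q = 0)]; norm_num
    calc (univ.filter (fun b : F => b ^ q + b = c)).card
        ≤ (Polynomial.X ^ q + Polynomial.X - Polynomial.C c : Polynomial F).roots.toFinset.card := by
          apply Finset.card_le_card
          intro b hb
          simp only [mem_filter, mem_univ, true_and] at hb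
          rw [Multiset.mem_toFinset, Polynomial.mem_roots hmonic.ne_zero]
          simp [Polynomial.IsRoot, hb]
      _ ≤ Multiset.card (Polynomial.X ^ q + Polynomial.X - Polynomial.C c : Polynomial F).roots :=
          Multiset.toFinset_card_le _
      _ ≤ _ := by
          have := (Polynomial.X ^ q + Polynomial.X - Polynomial.C c : Polynomial F).card_roots'
          rw [hdeg] at this; exact this
  have fixbound : (univ.filter (fun c : F => c ^ q = c)).card ≤ q := by
    have hmonic : (Polynomial.X ^ q - Polynomial.X : Polynomial F).Monic := by
      apply Polynomial.monic_X_pow_sub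
      rw [Polynomial.degree_X]; exact_mod_cast hq2
    have hdeg : (Polynomial.X ^ q - Polynomial.X : Polynomial F).natDegree = q := by
      compute_degree!
      · rw [if_neg (by omega : ¬ (1:ℕ) = q)]; norm_num [Int.subNatNat]
    calc (univ.filter (fun c : F => c ^ q = c)).card
        ≤ (Polynomial.X ^ q - Polynomial.X : Polynomial F).roots.toFinset.card := by
          apply Finset.card_le_card
          intro b hb
          simp only [mem_filter, mem_univ, true_and] at hb
          rw [Multiset.mem_toFinset, Polynomial.mem_roots hmonic.ne_zero]
          simp [Polynomial.IsRoot, hb, sub_eq_zero]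
      _ ≤ Multiset.card (Polynomial.X ^ q - Polynomial.X : Polynomial F).roots :=
          Multiset.toFinset_card_le _
      _ ≤ _ := by
          have := (Polynomial.X ^ q - Polynomial.X : Polynomial F).card_roots'
          rw [hdeg] at this; exact this
  have himsub : (univ.image (fun b : F => b ^ q + b)) ⊆ univ.filter (fun c : F => c ^ q = c) := by
    intro c hc
    simp only [mem_image, mem_univ, true_and] at hc
    obtain ⟨b, rfl⟩ := hc
    simp only [mem_filter, mem_univ, true_and]
    rw [← hpk, add_pow_char_pow, hpk, ← pow_mul, ← pow_two]
    rw [hcardF b]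
    ring
  have fiber : ∀ c ∈ univ.image (fun b : F => b ^ q + b),
      (univ.filter (fun b : F => b ^ q + b = c)).card
        = (univ.filter (fun b : F => b ^ q + b = 0)).card := by
    intro c hc
    simp only [mem_image, mem_univ, true_and] at hc
    obtain ⟨b₀, hb₀⟩ := hc
    apply Finset.card_bij (fun b _ => b - b₀)
    · intro b hb
      simp only [mem_filter, mem_univ, true_and] at hb ⊢
      have := map_sub φ b b₀
      simp only [φ, AddMonoidHom.mk'_apply] at this
      rw [this, hb, hb₀, sub_self]
    · intro a ha b hb h
      exact sub_left_injective h
    · intro b hb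
      simp only [mem_filter, mem_univ, true_and] at hb
      refine ⟨b + b₀, ?_, by ring⟩
      simp only [mem_filter, mem_univ, true_and]
      rw [hadd, hb, hb₀, zero_add]
  have hsplit : Fintype.card F = (univ.image (fun b : F => b ^ q + b)).card
      * (univ.filter (fun b : F => b ^ q + b = 0)).card := by
    rw [← Finset.card_univ]
    rw [Finset.card_eq_sum_card_fiberwise (f := fun b : F => b ^ q + b)
      (t := univ.image (fun b : F => b ^ q + b)) (fun x _ => mem_image_of_mem _ (mem_univ x))]
    rw [Finset.sum_congr rfl fiber, Finset.sum_const, smul_eq_mul]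
  have him_le : (univ.image (fun b : F => b ^ q + b)).card ≤ q :=
    le_trans (Finset.card_le_card himsub) fixbound
  have hker_le : (univ.filter (fun b : F => b ^ q + b = 0)).card ≤ q := rootbound 0
  have hker_eq : (univ.filter (fun b : F => b ^ q + b = 0)).card = q := by
    by_contra h
    have h1 : (univ.filter (fun b : F => b ^ q + b = 0)).card < q := lt_of_le_of_ne hker_le h
    have := hsplit
    rw [hF] at this
    nlinarith
  have him_eq : (univ.image (fun b : F => b ^ q + b)).card = q := by
    have := hsplit; rw [hF, hker_eq] at this
    nlinarith
  have himgeq : univ.image (fun b : F => b ^ q + b) = univ.filter (fun c : F => c ^ q = c) := by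
    apply Finset.eq_of_subset_of_card_le himsub
    rw [him_eq]; exact fixbound
  have hnorm : ∀ a : F, a ^ (q + 1) ∈ univ.image (fun b : F => b ^ q + b) := by
    intro a
    rw [himgeq, mem_filter]
    refine ⟨mem_univ _, ?_⟩
    rw [← pow_mul]
    have h2 : (q + 1) * q = q ^ 2 + q := by ring
    rw [h2, pow_add, hcardF a, pow_succ, mul_comm]
  show Nat.card {x : F × F // x.2 ^ q + x.2 = x.1 ^ (q + 1)} = q ^ 3
  rw [Nat.card_congr (Equiv.subtypeProdEquivSigmaSubtype
    (fun (a : F) (b : F) => b ^ q + b = a ^ (q + 1))), Nat.card_eq_fintype_card,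
    Fintype.card_sigma]
  have : ∀ a : F, Fintype.card {b : F // b ^ q + b = a ^ (q + 1)} = q := by
    intro a
    rw [Fintype.card_subtype]
    rw [fiber _ (hnorm a), hker_eq]
  rw [Finset.sum_congr rfl (fun a _ => this a), Finset.sum_const, smul_eq_mul, Finset.card_univ,
    hF]
  ring

private lemma herm_finrank_J {q : ℕ} (hq : IsPrimePow q)
    {F : Type*} [Field F] [Fintype F] (hF : Fintype.card F = q ^ 2)
    (J : Ideal (MvPolynomial (Fin 2) F))
    (hJ : J = ⨅ p ∈ {p : F × F | p.2 ^ q + p.2 = p.1 ^ (q + 1)},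
      RingHom.ker (MvPolynomial.eval (fun k => if k = 0 then p.1 else p.2))) :
    Module.finrank F (MvPolynomial (Fin 2) F ⧸ J) = q ^ 3 := by
  classical
  set S := {p : F × F | p.2 ^ q + p.2 = p.1 ^ (q + 1)} with hS
  haveI : Fintype ↥S := Fintype.ofFinite _
  set Φ : MvPolynomial (Fin 2) F →ₐ[F] (↥S → F) :=
    Pi.algHom F _ (fun s => MvPolynomial.aeval (fun k => if k = 0 then s.1.1 else s.1.2)) with hΦ
  have hker : RingHom.ker Φ = J := by
    rw [hJ]
    ext f
    rw [RingHom.mem_ker, Ideal.mem_iInf]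
    rw [funext_iff]
    constructor
    · intro h p
      rw [Ideal.mem_iInf]
      intro hp
      have := h ⟨p, hp⟩
      simpa [hΦ] using this
    · intro h s
      have := Ideal.mem_iInf.mp (h s.1) s.2
      simpa [hΦ] using this
  have hN2 : 2 ≤ Fintype.card F := Fintype.one_lt_card
  have hsurj : Function.Surjective Φ := by
    have hsingle : ∀ s₀ : ↥S, Pi.single s₀ (1 : F) ∈ Set.range Φ := by
      intro s₀
      refine ⟨(1 - (X 0 - C s₀.1.1) ^ (Fintype.card F - 1))
        * (1 - (X 1 - C s₀.1.2) ^ (Fintype.card F - 1)), ?_⟩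
      funext s
      have hev : Φ ((1 - (X 0 - C s₀.1.1) ^ (Fintype.card F - 1))
            * (1 - (X 1 - C s₀.1.2) ^ (Fintype.card F - 1))) s
          = (1 - (s.1.1 - s₀.1.1) ^ (Fintype.card F - 1))
            * (1 - (s.1.2 - s₀.1.2) ^ (Fintype.card F - 1)) := by
        simp [hΦ]
      rw [hev]
      by_cases hss : s = s₀
      · subst hss
        rw [Pi.single_eq_same]
        simp [zero_pow (by omega : Fintype.card F - 1 ≠ 0)]
      · rw [Pi.single_eq_of_ne hss]
        have h12 : s.1.1 ≠ s₀.1.1 ∨ s.1.2 ≠ s₀.1.2 := by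
          by_contra h
          push_neg at h
          exact hss (Subtype.ext (Prod.ext h.1 h.2))
        rcases h12 with h | h
        · rw [FiniteField.pow_card_sub_one_eq_one _ (sub_ne_zero.mpr h)]
          ring
        · rw [FiniteField.pow_card_sub_one_eq_one _ (sub_ne_zero.mpr h)]
          ring
    intro g
    have hg : g = ∑ s : ↥S, g s • (Pi.single s 1 : ↥S → F) := by
      funext t
      rw [Finset.sum_apply]
      simp [Pi.single_apply]
    have hmem : g ∈ LinearMap.range Φ.toLinearMap := by
      rw [hg]
      apply Submodule.sum_mem
      intro s _
      exact Submodule.smul_mem _ _ (hsingle s)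
    exact hmem
  have e := Ideal.quotientKerAlgEquivOfSurjective hsurj
  replace e := (Ideal.quotientEquivAlgOfEq F hker.symm).trans e
  rw [e.toLinearEquiv.finrank_eq]
  rw [Module.finrank_pi]
  rw [← Nat.card_eq_fintype_card]
  exact herm_count hq hF

private lemma herm_span {q : ℕ} (hq2 : 2 ≤ q)
    {F : Type*} [Field F]
    (E : MvPolynomial (Fin 2) F)
    (hE : E = (X 1) ^ q + X 1 - (X 0) ^ (q + 1)) :
    (Submodule.span F (Set.range (fun ij : Fin (q ^ 2) × Fin q =>
        (X 0 : MvPolynomial (Fin 2) F) ^ (ij.1 : ℕ) * (X 1) ^ (ij.2 : ℕ)))) ⊔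
      (Submodule.restrictScalars F
        (Ideal.span {E, (X 0 : MvPolynomial (Fin 2) F) ^ (q ^ 2) - X 0})) = ⊤ := by
  classical
  set I : Ideal (MvPolynomial (Fin 2) F) := Ideal.span {E, (X 0) ^ (q ^ 2) - X 0} with hI
  set W := (Submodule.span F (Set.range (fun ij : Fin (q ^ 2) × Fin q =>
      (X 0 : MvPolynomial (Fin 2) F) ^ (ij.1 : ℕ) * (X 1) ^ (ij.2 : ℕ)))) ⊔
      Submodule.restrictScalars F I with hW
  have hEmem : E ∈ I := Ideal.subset_span (Set.mem_insert _ _)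
  have hXmem : (X 0 : MvPolynomial (Fin 2) F) ^ (q ^ 2) - X 0 ∈ I :=
    Ideal.subset_span (Set.mem_insert_of_mem _ rfl)
  have key : ∀ b a : ℕ, (X 0 : MvPolynomial (Fin 2) F) ^ a * (X 1) ^ b ∈ W := by
    intro b
    induction b using Nat.strong_induction_on with
    | _ b ihb =>
      by_cases hb : b < q
      · intro a
        induction a using Nat.strong_induction_on with
        | _ a iha =>
          by_cases ha : a < q ^ 2
          · exact Submodule.mem_sup_left (Submodule.subset_span
              ⟨(⟨a, ha⟩, ⟨b, hb⟩), rfl⟩)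
          · push_neg at ha
            obtain ⟨c, rfl⟩ := Nat.exists_eq_add_of_le ha
            have hid : (X 0 : MvPolynomial (Fin 2) F) ^ (q ^ 2 + c) * (X 1) ^ b
                = (X 0) ^ c * (X 1) ^ b * ((X 0) ^ (q ^ 2) - X 0)
                  + (X 0) ^ (c + 1) * (X 1) ^ b := by
              ring
            rw [hid]
            refine Submodule.add_mem _ ?_ (iha (c + 1) (by nlinarith))
            exact Submodule.mem_sup_right (I.mul_mem_left _ hXmem)
      · push_neg at hb
        obtain ⟨c, rfl⟩ := Nat.exists_eq_add_of_le hb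
        intro a
        have hid : (X 0 : MvPolynomial (Fin 2) F) ^ a * (X 1) ^ (q + c)
            = (X 0) ^ a * (X 1) ^ c * E
              + (X 0) ^ (a + q + 1) * (X 1) ^ c - (X 0) ^ a * (X 1) ^ (c + 1) := by
          rw [hE]; ring
        rw [hid]
        refine Submodule.sub_mem _ (Submodule.add_mem _ ?_ ?_) ?_
        · exact Submodule.mem_sup_right (I.mul_mem_left _ hEmem)
        · exact ihb c (by omega) _
        · exact ihb (c + 1) (by omega) _
  rw [eq_top_iff]
  intro f _
  induction f using MvPolynomial.induction_on' with
  | add p r hp hr => exact Submodule.add_mem _ (hp trivial) (hr trivial)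
  | monomial u a =>
    have hu : u = Finsupp.single 0 (u 0) + Finsupp.single 1 (u 1) := by
      ext i
      fin_cases i <;> simp [Finsupp.single_apply]
    have hmon : (monomial u a : MvPolynomial (Fin 2) F)
        = a • ((X 0) ^ (u 0) * (X 1) ^ (u 1)) := by
      rw [hu]
      rw [X_pow_eq_monomial, X_pow_eq_monomial, monomial_mul]
      rw [smul_monomial]
      simp
    rw [hmon]
    exact Submodule.smul_mem _ _ (key (u 1) (u 0))

theorem stmt_15 (q : ℕ) (hq : IsPrimePow q)
    (F : Type*) [Field F] [Fintype F] (hF : Fintype.card F = q ^ 2)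
    (E : MvPolynomial (Fin 2) F)
    (hE : E = (MvPolynomial.X 1) ^ q + MvPolynomial.X 1 - (MvPolynomial.X 0) ^ (q + 1))
    (J : Ideal (MvPolynomial (Fin 2) F))
    (hJ : J = ⨅ p ∈ {p : F × F | p.2 ^ q + p.2 = p.1 ^ (q + 1)},
      RingHom.ker (MvPolynomial.eval (fun k => if k = 0 then p.1 else p.2))) :
    J = Ideal.span {E, (MvPolynomial.X 0) ^ (q ^ 2) - MvPolynomial.X 0} ∧
    Module.finrank F (MvPolynomial (Fin 2) F ⧸ J) = q ^ 3 := by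
  classical
  have hq2 : 2 ≤ q := by
    obtain ⟨p, k, hp, hk, hpk⟩ := hq
    replace hp := Nat.prime_iff.mpr hp
    rw [← hpk]; calc 2 ≤ p := hp.two_le
    _ = p ^ 1 := (pow_one p).symm
    _ ≤ p ^ k := Nat.pow_le_pow_right hp.pos hk
  set I : Ideal (MvPolynomial (Fin 2) F) := Ideal.span {E, (X 0) ^ (q ^ 2) - X 0} with hI
  have hrJ : Module.finrank F (MvPolynomial (Fin 2) F ⧸ J) = q ^ 3 := herm_finrank_J hq hF J hJ
  -- I ≤ J
  have hIJ : I ≤ J := by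
    rw [hI, hJ, Ideal.span_le]
    rintro f (rfl | rfl)
    · rw [SetLike.mem_coe, Ideal.mem_iInf]
      intro p
      rw [Ideal.mem_iInf]
      intro hp
      rw [RingHom.mem_ker, hE]
      simp only [Set.mem_setOf_eq] at hp
      simp only [map_sub, map_add, map_pow, eval_X]
      norm_num
      linear_combination hp
    · rw [SetLike.mem_coe, Ideal.mem_iInf]
      intro p
      rw [Ideal.mem_iInf]
      intro hp
      rw [RingHom.mem_ker]
      simp only [map_sub, map_pow, eval_X]
      norm_num
      rw [← hF, FiniteField.pow_card, sub_self]
  -- finrank of quotient by I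
  set g : Fin (q ^ 2) × Fin q → MvPolynomial (Fin 2) F ⧸ I :=
    fun ij => Ideal.Quotient.mk I ((X 0) ^ (ij.1 : ℕ) * (X 1) ^ (ij.2 : ℕ)) with hg
  have hspan : Submodule.span F (Set.range g) = ⊤ := by
    have h1 := herm_span hq2 E hE
    have mkL := (Ideal.Quotient.mkₐ F I).toLinearMap
    have h2 : Submodule.map (Ideal.Quotient.mkₐ F I).toLinearMap ⊤ = ⊤ := by
      rw [Submodule.map_top, LinearMap.range_eq_top]
      exact fun y => by
        obtain ⟨z, hz⟩ := Ideal.Quotient.mk_surjective y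
        exact ⟨z, hz⟩
    rw [← h1, Submodule.map_sup, Submodule.map_span, ← Set.range_comp] at h2
    have h3 : Submodule.map (Ideal.Quotient.mkₐ F I).toLinearMap
        (Submodule.restrictScalars F I) = ⊥ := by
      rw [eq_bot_iff]
      rintro y ⟨x, hx, rfl⟩
      simp only [AlgHom.toLinearMap_apply, Ideal.Quotient.mkₐ_eq_mk, Submodule.mem_bot]
      exact Ideal.Quotient.eq_zero_iff_mem.mpr hx
    rw [h3, sup_bot_eq] at h2
    rw [← h2]
    rfl
  haveI : Module.Finite F (MvPolynomial (Fin 2) F ⧸ I) := Module.finite_def.mpr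
    ⟨Finset.univ.image g, by rw [Finset.coe_image, Finset.coe_univ, Set.image_univ, hspan]⟩
  have hrI : Module.finrank F (MvPolynomial (Fin 2) F ⧸ I) ≤ q ^ 3 := by
    rw [← finrank_top F, ← hspan]
    refine le_trans (finrank_span_le_card _) ?_
    rw [Set.toFinset_range]
    refine le_trans Finset.card_image_le ?_
    rw [Finset.card_univ, Fintype.card_prod, Fintype.card_fin, Fintype.card_fin]
    exact le_of_eq (by ring)
  -- the comparison map
  set φ : (MvPolynomial (Fin 2) F ⧸ I) →ₐ[F] (MvPolynomial (Fin 2) F ⧸ J) :=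
    Ideal.Quotient.liftₐ I (Ideal.Quotient.mkₐ F J)
      (fun a ha => by
        rw [Ideal.Quotient.mkₐ_eq_mk, Ideal.Quotient.eq_zero_iff_mem]
        exact hIJ ha) with hφ
  have hφmk : ∀ z, φ (Ideal.Quotient.mk I z) = Ideal.Quotient.mk J z := by
    intro z
    rw [hφ, Ideal.Quotient.liftₐ_apply]
    rfl
  have hφsurj : Function.Surjective φ := by
    intro y
    obtain ⟨z, rfl⟩ := Ideal.Quotient.mk_surjective y
    exact ⟨Ideal.Quotient.mk I z, hφmk z⟩
  have hrange : LinearMap.range φ.toLinearMap = ⊤ := LinearMap.range_eq_top.mpr hφsurj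
  have hrn := LinearMap.finrank_range_add_finrank_ker φ.toLinearMap
  rw [hrange, finrank_top, hrJ] at hrn
  have hker0 : Module.finrank F (LinearMap.ker φ.toLinearMap) = 0 := by omega
  have hkerbot : LinearMap.ker φ.toLinearMap = ⊥ := Submodule.finrank_eq_zero.mp hker0
  have hJI : J ≤ I := by
    intro f hf
    have h0 : φ.toLinearMap (Ideal.Quotient.mk I f) = 0 := by
      show φ (Ideal.Quotient.mk I f) = 0
      rw [hφmk f]
      exact Ideal.Quotient.eq_zero_iff_mem.mpr hf
    have h2 : Ideal.Quotient.mk I f ∈ LinearMap.ker φ.toLinearMap := h0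
    rw [hkerbot, Submodule.mem_bot] at h2
    exact Ideal.Quotient.eq_zero_iff_mem.mp h2
  exact ⟨le_antisymm hJI hIJ, hrJ⟩
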